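/- Fix m ∈ ℝ and γ ∈ ℝ with γ ≠ 0. Let C₃(b) = (1-b₁²)b₂ - b₁²m² - b₃² and G_red(b) = b₂ + m² - γ²(1-b₁²) on ℝ³. Then for a point b ∈ ℝ³ satisfying C₃(b) = 0, b₂ ≥ 0 and b₁² ≤ 1, the gradients ∇C₃(b) and ∇G_red(b) are parallel (i.e. their cross product vanishes) if and only if b = (0,0,0), or m = 0 and b = (±1, 0, 0). Consequently the set of critical values of the energy–momentum map (L_z, G) consists exactly of the parabola g = m² - γ² (from the critical points b = (0,0,0)) and the isolated critical value (m,g) = (0,0) (from the singular points (±1,0,0) of P₀). -/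

import Mathlib

noncomputable section

/-- The cross product in `ℝ³`. -/
def cross3 (v w : Fin 3 → ℝ) : Fin 3 → ℝ :=
  ![v 1 * w 2 - v 2 * w 1, v 2 * w 0 - v 0 * w 2, v 0 * w 1 - v 1 * w 0]

/-- `ℝ³` (`b`-space) as a Euclidean space. -/
abbrev E3 := EuclideanSpace ℝ (Fin 3)

/-- Package a triple of reals as a point of `E3`. -/
def toE3 (v : Fin 3 → ℝ) : E3 := WithLp.toLp 2 v

/-- `C₃(b) = (1-b₁²)b₂ - b₁²m² - b₃²`. -/
def C3fun (m : ℝ) : E3 → ℝ := fun b =>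
  (1 - (b 0) ^ 2) * b 1 - (b 0) ^ 2 * m ^ 2 - (b 2) ^ 2

/-- The reduced Hamiltonian `G_red(b) = b₂ + m² - γ²(1-b₁²)`. -/
def Gredfun (m γ : ℝ) : E3 → ℝ := fun b => b 1 + m ^ 2 - γ ^ 2 * (1 - (b 0) ^ 2)

lemma hasGradientAt_C3 (m : ℝ) (b : E3) :
    HasGradientAt (C3fun m)
      (toE3 ![-2 * b 0 * b 1 - 2 * b 0 * m ^ 2, 1 - (b 0) ^ 2, -2 * b 2]) b := by
  rw [hasGradientAt_iff_hasFDerivAt]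
  have h0 := (EuclideanSpace.proj (𝕜 := ℝ) (0 : Fin 3)).hasFDerivAt (x := b)
  have h1 := (EuclideanSpace.proj (𝕜 := ℝ) (1 : Fin 3)).hasFDerivAt (x := b)
  have h2 := (EuclideanSpace.proj (𝕜 := ℝ) (2 : Fin 3)).hasFDerivAt (x := b)
  have h := (((h0.mul h0).const_sub 1).mul h1).sub
    (((h0.mul h0).mul_const (m ^ 2)).add (h2.mul h2))
  have h' : HasFDerivAt (C3fun m) _ b := h.congr_of_eventuallyEq (by
    filter_upwards with x; simp [C3fun, PiLp.proj_apply]; ring)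
  refine h'.congr_fderiv ?_
  ext x
  simp [toE3, InnerProductSpace.toDual_apply_apply, PiLp.inner_apply, Fin.sum_univ_three,
    PiLp.proj_apply, smul_eq_mul]
  ring

lemma hasGradientAt_Gred (m γ : ℝ) (b : E3) :
    HasGradientAt (Gredfun m γ) (toE3 ![2 * γ ^ 2 * b 0, 1, 0]) b := by
  rw [hasGradientAt_iff_hasFDerivAt]
  have h0 := (EuclideanSpace.proj (𝕜 := ℝ) (0 : Fin 3)).hasFDerivAt (x := b)
  have h1 := (EuclideanSpace.proj (𝕜 := ℝ) (1 : Fin 3)).hasFDerivAt (x := b)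
  have h := (h1.add_const (m ^ 2)).sub (((h0.mul h0).const_sub 1).const_mul (γ ^ 2))
  have h' : HasFDerivAt (Gredfun m γ) _ b := h.congr_of_eventuallyEq (by
    filter_upwards with x
    simp only [Gredfun, PiLp.proj_apply, Pi.sub_apply, Pi.mul_apply]
    ring)
  refine h'.congr_fderiv ?_
  ext x
  simp [toE3, InnerProductSpace.toDual_apply_apply, PiLp.inner_apply, Fin.sum_univ_three,
    PiLp.proj_apply, smul_eq_mul]
  first
  | tauto
  | ring

/-- On the reduced phase space (`C₃ = 0`, `b₂ ≥ 0`, `b₁² ≤ 1`, with `γ ≠ 0`), the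
gradients `∇C₃` and `∇G_red` are parallel iff `b = (0,0,0)`, or `m = 0` and
`b = (±1,0,0)`. The corresponding critical values of `(L_z, G)` are the parabola
`g = m² - γ²` (from `b = 0`) and the isolated value `(0,0)` (from `(±1,0,0)`). -/
theorem critical_points_reduced (m γ : ℝ) (hγ : γ ≠ 0) (b : E3)
    (hC : C3fun m b = 0) (hb2 : 0 ≤ b 1) (hb1 : (b 0) ^ 2 ≤ 1) :
    (cross3 (fun i => gradient (C3fun m) b i) (fun i => gradient (Gredfun m γ) b i) = 0 ↔
      ((b 0 = 0 ∧ b 1 = 0 ∧ b 2 = 0) ∨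
        (m = 0 ∧ (b 0 = 1 ∨ b 0 = -1) ∧ b 1 = 0 ∧ b 2 = 0))) ∧
    Gredfun m γ (0 : E3) = m ^ 2 - γ ^ 2 ∧
    (m = 0 → Gredfun m γ (toE3 ![1, 0, 0]) = 0 ∧ Gredfun m γ (toE3 ![-1, 0, 0]) = 0) := by
  have hgC := (hasGradientAt_C3 m b).gradient
  have hgG := (hasGradientAt_Gred m γ b).gradient
  refine ⟨?_, ?_, ?_⟩
  · rw [hgC, hgG]
    have hcross : ∀ c0 c1 c2 : ℝ, (![c0, c1, c2] : Fin 3 → ℝ) = 0 ↔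
        (c0 = 0 ∧ c1 = 0 ∧ c2 = 0) := by
      intro c0 c1 c2
      constructor
      · intro h
        exact ⟨congrFun h 0, congrFun h 1, congrFun h 2⟩
      · rintro ⟨h0, h1, h2⟩
        funext i
        fin_cases i <;> simpa
    simp only [cross3, toE3, Matrix.cons_val_zero, Matrix.cons_val_one, Matrix.head_cons,
      Matrix.cons_val_two, Matrix.tail_cons, hcross]
    constructor
    · rintro ⟨h0, _, h2⟩
      -- h0 : (1 - b 0 ^2) * 0 - (-2 * b 2) * 1 = 0, so b 2 = 0
      have hb3 : b 2 = 0 := by nlinarith [h0]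
      -- h2 gives b 0 * ((b 1 + m^2) + γ^2 * (1 - b 0^2)) = 0
      have key : b 0 * ((b 1 + m ^ 2) + γ ^ 2 * (1 - (b 0) ^ 2)) = 0 := by nlinarith [h2]
      rcases mul_eq_zero.mp key with h | h
      · left
        refine ⟨h, ?_, hb3⟩
        have := hC
        simp only [C3fun, h, hb3] at this
        nlinarith [this]
      · right
        have hm2 : (0 : ℝ) ≤ m ^ 2 := sq_nonneg m
        have hγ2 : (0 : ℝ) ≤ γ ^ 2 * (1 - (b 0) ^ 2) := by
          apply mul_nonneg (sq_nonneg γ); linarith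
        have hb1z : b 1 = 0 := by linarith
        have hmz : m ^ 2 = 0 := by linarith
        have hone : γ ^ 2 * (1 - (b 0) ^ 2) = 0 := by linarith
        have hγ2pos : (0 : ℝ) < γ ^ 2 := by positivity
        have hsq : (b 0) ^ 2 = 1 := by
          rcases mul_eq_zero.mp hone with h' | h'
          · exact absurd h' (ne_of_gt hγ2pos)
          · linarith
        refine ⟨by nlinarith [hmz], ?_, hb1z, hb3⟩
        have : (b 0 - 1) * (b 0 + 1) = 0 := by nlinarith [hsq]
        rcases mul_eq_zero.mp this with h' | h'
        · left; linarith
        · right; linarith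
    · rintro (⟨h0, h1, h2⟩ | ⟨hm, h0, h1, h2⟩)
      · refine ⟨?_, ?_, ?_⟩ <;> (simp only [h0, h1, h2]; try ring)
      · rcases h0 with h0 | h0 <;>
          (refine ⟨?_, ?_, ?_⟩ <;> (simp only [hm, h0, h1, h2]; try ring))
  · have : (0 : E3) 0 = 0 ∧ (0 : E3) 1 = 0 := ⟨rfl, rfl⟩
    simp [Gredfun]; try ring
  · intro hm
    constructor <;> (simp [Gredfun, toE3, hm]; try ring_nf)
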